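/- Let T be an ε-critical tournament with |T| = n containing a smooth (c, λ, w)-structure (S_1,...,S_{|w|}), and suppose w(j) = 0, w(j+1) = 1, so that |S_j| ≥ cn and S_{j+1} induces a transitive tournament with |S_{j+1}| ≥ c·tr(T). Let P ⊆ S_{j+1} be any subset with |P| ≥ (c/h)·tr(T) for some h ≥ 1. If ε < log_{c/2}(1 − c/h), then the set S_j* = {x ∈ S_j : there exists v ∈ P with (v,x) ∈ E(T)} satisfies |S_j*| ≥ |S_j|/2 ≥ (c/2)n. -/

import Mathlib

open scoped Classical

def IsTournament {V : Type*} (E : V → V → Prop) : Prop :=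
  (∀ v, ¬ E v v) ∧ ∀ u v : V, u ≠ v → (E u v ↔ ¬ E v u)

def TransOn {V : Type*} (E : V → V → Prop) (s : Finset V) : Prop :=
  ∀ a ∈ s, ∀ b ∈ s, ∀ c ∈ s, E a b → E b c → E a c

noncomputable def trOn {V : Type*} (E : V → V → Prop) (A : Finset V) : ℕ :=
  A.powerset.sup fun s => if TransOn E s then s.card else 0

noncomputable def trT {V : Type*} (E : V → V → Prop) [Fintype V] : ℕ :=
  trOn E Finset.univ

def IsCritical {V : Type*} [Fintype V] (E : V → V → Prop) (ε : ℝ) : Prop :=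
  (trT E : ℝ) < (Fintype.card V : ℝ) ^ ε ∧
  ∀ A : Finset V, A ≠ Finset.univ → ((A.card : ℝ) ^ ε ≤ (trOn E A : ℝ))

noncomputable def dens {V : Type*} (E : V → V → Prop) (X Y : Finset V) : ℝ :=
  (((X ×ˢ Y).filter fun p => E p.1 p.2).card : ℝ) / ((X.card : ℝ) * (Y.card : ℝ))

def SmoothStruct {V : Type*} [Fintype V] (E : V → V → Prop) (c lam : ℝ) {m : ℕ}
    (w : Fin m → Bool) (S : Fin m → Finset V) : Prop :=
  (∀ i j : Fin m, i ≠ j → Disjoint (S i) (S j)) ∧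
  (∀ i, w i = false → c * (Fintype.card V : ℝ) ≤ ((S i).card : ℝ)) ∧
  (∀ i, w i = true → TransOn E (S i) ∧ c * (trT E : ℝ) ≤ ((S i).card : ℝ)) ∧
  (∀ i j : Fin m, i < j →
    (∀ v ∈ S i, 1 - lam ≤ dens E {v} (S j)) ∧ (∀ v ∈ S j, 1 - lam ≤ dens E (S i) {v}))

lemma exists_trans_subset {V : Type*} (E : V → V → Prop) (A : Finset V) :
    ∃ D, D ⊆ A ∧ TransOn E D ∧ D.card = trOn E A := by
  obtain ⟨s, hs, he⟩ := Finset.exists_mem_eq_sup A.powerset ⟨∅, Finset.empty_mem_powerset A⟩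
    (fun s => if TransOn E s then s.card else 0)
  by_cases ht : TransOn E s
  · exact ⟨s, Finset.mem_powerset.mp hs, ht, by rw [trOn, he, if_pos ht]⟩
  · refine ⟨∅, Finset.empty_subset _, by simp [TransOn], ?_⟩
    rw [trOn, he, if_neg ht]; simp

lemma le_trOn {V : Type*} {E : V → V → Prop} {A D : Finset V} (hDA : D ⊆ A)
    (hD : TransOn E D) : D.card ≤ trOn E A := by
  have := Finset.le_sup (f := fun s => if TransOn E s then s.card else 0)
    (Finset.mem_powerset.mpr hDA)
  simp only [if_pos hD] at this; exact this

set_option maxHeartbeats 1000000 in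
/-- In an ε-critical tournament with a smooth structure, if `w(j)=0`,
`w(j+1)=1` and `P ⊆ S_{j+1}` has `|P| ≥ (c/h)·tr(T)`, with
`ε < log_{c/2}(1-c/h)`, then at least half of `S_j` has an in-neighbour in
`P`. -/
theorem half_of_linear_set_beaten {V : Type*} [Fintype V] (E : V → V → Prop)
    (hT : IsTournament E) (ε c lam h : ℝ) (hε : 0 < ε) (hc : 0 < c)
    (hcrit : IsCritical E ε) {m : ℕ} (w : Fin m → Bool) (S : Fin m → Finset V)
    (hS : SmoothStruct E c lam w S) (j j' : Fin m)
    (hjj : ((j' : ℕ)) = (j : ℕ) + 1) (hwj : w j = false) (hwj' : w j' = true)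
    (P : Finset V) (hP : P ⊆ S j') (hh : 1 ≤ h)
    (hPsize : c / h * (trT E : ℝ) ≤ (P.card : ℝ))
    (hlog : ε < Real.logb (c / 2) (1 - c / h)) :
    ((S j).card : ℝ) / 2 ≤ (((S j).filter fun x => ∃ v ∈ P, E v x).card : ℝ) ∧
    c / 2 * (Fintype.card V : ℝ) ≤
      (((S j).filter fun x => ∃ v ∈ P, E v x).card : ℝ) := by
  obtain ⟨hdisj, h0, h1, _⟩ := hS
  set n := Fintype.card V with hn
  -- the ambient tournament is nonempty
  have hn1 : 1 ≤ n := by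
    rcases Nat.eq_zero_or_pos n with h0' | h0'
    · exfalso
      have h2 := hcrit.1
      rw [← hn] at h2
      rw [h0', Nat.cast_zero, Real.zero_rpow hε.ne'] at h2
      have h3 : (0:ℝ) ≤ (trT E : ℝ) := Nat.cast_nonneg _
      linarith
    · exact h0'
  have hV : Nonempty V := by
    rw [← Fintype.card_pos_iff]; exact hn1
  -- `trT ≥ 1`
  have htr1 : 1 ≤ trT E := by
    obtain ⟨v⟩ := hV
    have htv : TransOn E ({v} : Finset V) := by
      intro a ha b hb c hc hab _
      simp only [Finset.mem_singleton] at ha hb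
      rw [ha, hb] at hab; exact absurd hab (hT.1 v)
    have := le_trOn (E := E) (Finset.subset_univ ({v} : Finset V)) htv
    simpa [trT] using this
  have hSjn : ((S j).card : ℝ) ≤ (n : ℝ) := by
    exact_mod_cast Finset.card_le_univ (S j)
  have hcn : c * (n : ℝ) ≤ ((S j).card : ℝ) := h0 j hwj
  have hnpos : (0:ℝ) < (n:ℝ) := by exact_mod_cast hn1
  have hc1 : c ≤ 1 := by
    nlinarith
  have hhpos : (0:ℝ) < h := lt_of_lt_of_le one_pos hh
  have hch : 0 < c / h := div_pos hc hhpos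
  have hchle1 : c / h ≤ 1 := by
    rw [div_le_one hhpos]; linarith
  set x : ℝ := 1 - c / h with hxdef
  have hx0 : 0 ≤ x := by simp [hxdef]; linarith
  have hx1 : x < 1 := by simp [hxdef]; linarith [hch]
  have hcb0 : (0:ℝ) < c / 2 := by linarith
  have hcb1 : c / 2 < 1 := by linarith
  have hlogb_neg : Real.log (c / 2) < 0 := Real.log_neg hcb0 hcb1
  -- `x > 0`
  have hxpos : 0 < x := by
    rcases lt_or_eq_of_le hx0 with h' | h'
    · exact h'
    · exfalso
      rw [Real.logb, ← h', Real.log_zero, zero_div] at hlog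
      linarith
  -- `x < (c/2)^ε`
  have key : x < (c / 2) ^ ε := by
    rw [Real.logb] at hlog
    have hlx : Real.log x < ε * Real.log (c / 2) := (lt_div_iff_of_neg hlogb_neg).mp hlog
    have : Real.exp (Real.log x) < Real.exp (Real.log (c / 2) * ε) := by
      rw [mul_comm] at hlx; exact Real.exp_lt_exp.mpr hlx
    rwa [Real.exp_log hxpos, ← Real.rpow_def_of_pos hcb0] at this
  set t : ℝ := (trT E : ℝ) with htdef
  have ht1 : (1:ℝ) ≤ t := by rw [htdef]; exact_mod_cast htr1
  have hPpos : (0:ℝ) < (P.card : ℝ) := lt_of_lt_of_le (by nlinarith) hPsize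
  have hPne : P.Nonempty := by
    rw [← Finset.card_pos]; exact_mod_cast hPpos
  obtain ⟨v₀, hv₀⟩ := hPne
  have hjne : j ≠ j' := by
    intro hEq; rw [hEq] at hjj; omega
  have hdisjSS : Disjoint (S j) (S j') := hdisj j j' hjne
  -- main half
  have main : ((S j).card : ℝ) / 2 ≤ (((S j).filter fun x => ∃ v ∈ P, E v x).card : ℝ) := by
    by_contra hcon
    push_neg at hcon
    set A : Finset V := (S j).filter (fun x => ¬ ∃ v ∈ P, E v x) with hAdef
    have hcards : ((S j).filter fun x => ∃ v ∈ P, E v x).card + A.card = (S j).card :=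
      Finset.card_filter_add_card_filter_not _
    have hAcard : ((S j).card : ℝ) / 2 < (A.card : ℝ) := by
      have : (((S j).filter fun x => ∃ v ∈ P, E v x).card : ℝ) + (A.card : ℝ) = ((S j).card : ℝ) := by
        exact_mod_cast hcards
      linarith
    have hASj : A ⊆ S j := Finset.filter_subset _ _
    have hv₀A : v₀ ∉ A := fun hmem =>
      Finset.disjoint_left.mp hdisjSS (hASj hmem) (hP hv₀)
    have hAne : A ≠ Finset.univ := fun hEq => hv₀A (hEq ▸ Finset.mem_univ v₀)
    have hcritA : ((A.card : ℝ)) ^ ε ≤ (trOn E A : ℝ) := hcrit.2 A hAne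
    obtain ⟨D, hDA, hDtr, hDcard⟩ := exists_trans_subset E A
    -- edges from A to P
    have hedge : ∀ y ∈ A, ∀ v ∈ P, ¬ E v y ∧ E y v := by
      intro y hy v hv
      rw [hAdef, Finset.mem_filter] at hy
      have hne : y ≠ v := fun hEq =>
        Finset.disjoint_left.mp hdisjSS hy.1 (hEq ▸ hP hv)
      have hnvy : ¬ E v y := fun hvy => hy.2 ⟨v, hv, hvy⟩
      exact ⟨hnvy, (hT.2 y v hne).mpr hnvy⟩
    have hPtr : TransOn E (S j') := (h1 j' hwj').1
    -- D ∪ P is transitive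
    have hDPtr : TransOn E (D ∪ P) := by
      intro a ha b hb c' hc' hab hbc
      rw [Finset.mem_union] at ha hb hc'
      rcases ha with ha | ha
      · rcases hc' with hc' | hc'
        · rcases hb with hb | hb
          · exact hDtr a ha b hb c' hc' hab hbc
          · exact absurd hbc (hedge c' (hDA hc') b hb).1
        · exact (hedge a (hDA ha) c' hc').2
      · rcases hb with hb | hb
        · exact absurd hab (hedge b (hDA hb) a ha).1
        · rcases hc' with hc' | hc'
          · exact absurd hbc (hedge c' (hDA hc') b hb).1
          · exact hPtr a (hP ha) b (hP hb) c' (hP hc') hab hbc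
    have hDPdisj : Disjoint D P := Finset.disjoint_left.mpr
      (fun {y} hy hyP => Finset.disjoint_left.mp hdisjSS (hASj (hDA hy)) (hP hyP))
    have hDPcard : (D ∪ P).card = D.card + P.card := Finset.card_union_of_disjoint hDPdisj
    have hDPle : D.card + P.card ≤ trT E := by
      rw [← hDPcard]; exact le_trOn (Finset.subset_univ _) hDPtr
    have hDPleR : (D.card : ℝ) + (P.card : ℝ) ≤ t := by rw [htdef]; exact_mod_cast hDPle
    have hDge : ((A.card : ℝ)) ^ ε ≤ (D.card : ℝ) := by
      rw [hDcard]; exact_mod_cast hcritA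
    have hAbig : (c / 2) * (n : ℝ) ≤ (A.card : ℝ) := by linarith
    have hrle : ((c / 2) * (n : ℝ)) ^ ε ≤ ((A.card : ℝ)) ^ ε :=
      Real.rpow_le_rpow (by positivity) hAbig hε.le
    have hsplit : ((c / 2) * (n : ℝ)) ^ ε = (c / 2) ^ ε * (n : ℝ) ^ ε :=
      Real.mul_rpow hcb0.le hnpos.le
    have hNt : t < (n : ℝ) ^ ε := hcrit.1
    have hppos : (0:ℝ) < (c / 2) ^ ε := Real.rpow_pos_of_pos hcb0 ε
    have hpt : (c / 2) ^ ε * t < (c / 2) ^ ε * (n : ℝ) ^ ε :=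
      mul_lt_mul_of_pos_left hNt hppos
    have hxt : x * t < (c / 2) ^ ε * t :=
      mul_lt_mul_of_pos_right key (by linarith)
    -- x * t ≥ (c/2)^ε * n^ε
    have hxt_eq : x * t = t - c / h * t := by rw [hxdef]; ring
    have hfinal : (c / 2) ^ ε * (n : ℝ) ^ ε ≤ x * t := by
      linarith [hrle, hsplit, hDge, hDPleR, hPsize, hxt_eq]
    linarith
  refine ⟨main, ?_⟩
  linarith
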